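/- arXiv:1903.01291 — 2 statements merged into one kernel-verified Lean document; each statement's English description precedes it below -/
import Mathlib

section
/- Let B be a simple bipartite graph with bipartition V(B) = W ⊎ U, G its half-square, D = (T, β_D) a nice tree decomposition of B, and D' = (T, β_{D'}) the derived decomposition of G. Let t be a join node of D with children t1 and t2. Then Original(t) = Original(t1) = Original(t2), Cliques(t) = Cliques(t1) = Cliques(t2), Fake(t1) ∩ Fake(t2) = ∅, and Fake(t) = Fake(t1) ∪ Fake(t2). -/
open SimpleGraph

section Defs

variable {V : Type*} {ι : Type*}

/-- `W, U` is a bipartition of the simple graph `B`. -/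
def IsBipartition (B : SimpleGraph V) (W U : Set V) : Prop :=
  (∀ v, v ∈ W ∨ v ∈ U) ∧ (∀ v, ¬(v ∈ W ∧ v ∈ U)) ∧
    ∀ ⦃a b⦄, B.Adj a b → (a ∈ W ∧ b ∈ U) ∨ (a ∈ U ∧ b ∈ W)

/-- The half-square of `B` on side `W`: two distinct vertices of `W` are adjacent
iff they have a common neighbor in `B`. -/
def halfSquare (B : SimpleGraph V) (W : Set V) : SimpleGraph V where
  Adj a b := a ≠ b ∧ a ∈ W ∧ b ∈ W ∧ ∃ s, B.Adj a s ∧ B.Adj b s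
  symm := by
    constructor
    rintro a b ⟨hne, ha, hb, s, h1, h2⟩
    exact ⟨hne.symm, hb, ha, s, h2, h1⟩
  loopless := by constructor; rintro a ⟨hne, _⟩; exact hne rfl

/-- Tree decomposition of the graph `H` with vertex set `S`, over the tree `T`. -/
structure IsTreeDecompOn (H : SimpleGraph V) (S : Set V) (T : SimpleGraph ι)
    (β : ι → Set V) : Prop where
  covers : ∀ v ∈ S, ∃ t, v ∈ β t
  edge_mem : ∀ ⦃u v⦄, H.Adj u v → ∃ t, u ∈ β t ∧ v ∈ β t
  conn : ∀ v ∈ S, (T.induce {t | v ∈ β t}).Connected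

/-- `t'` is a descendant of `t` (inclusively) in the tree `T` rooted at `r`:
`t` lies on every path from `t'` to the root. -/
def Desc (T : SimpleGraph ι) (r : ι) (t t' : ι) : Prop :=
  ∀ p : T.Walk t' r, p.IsPath → t ∈ p.support

/-- `γ(t)`: union of the bags of `t` and of all its descendants. -/
def gammaSet (T : SimpleGraph ι) (r : ι) (β : ι → Set V) (t : ι) : Set V :=
  ⋃ t' ∈ {t' | Desc T r t t'}, β t'

/-- The bag of the derived decomposition. -/
def derivedBag (B : SimpleGraph V) (W U : Set V) (T : SimpleGraph ι) (r : ι)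
    (β : ι → Set V) (t : ι) : Set V :=
  (β t ∩ W) ∪ ⋃ s ∈ β t ∩ U, B.neighborSet s ∩ gammaSet T r β t

def originalSet (B : SimpleGraph V) (W U : Set V) (T : SimpleGraph ι) (r : ι)
    (β : ι → Set V) (t : ι) : Set V :=
  β t ∩ derivedBag B W U T r β t

def fakeSet (B : SimpleGraph V) (W U : Set V) (T : SimpleGraph ι) (r : ι)
    (β : ι → Set V) (t : ι) : Set V :=
  derivedBag B W U T r β t \ β t

def cliquesAt (B : SimpleGraph V) (U : Set V) (β : ι → Set V) (t : ι) : Set (Set V) :=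
  {K | ∃ s ∈ β t ∩ U, K = B.neighborSet s}

def IsChild (T : SimpleGraph ι) (r : ι) (t t' : ι) : Prop :=
  T.Adj t t' ∧ Desc T r t t'

def IsLeafNode (T : SimpleGraph ι) (r : ι) (β : ι → Set V) (t : ι) : Prop :=
  (∀ t', ¬ IsChild T r t t') ∧ β t = ∅

def IsForgetNode (T : SimpleGraph ι) (r : ι) (β : ι → Set V) (w : V) (t : ι) : Prop :=
  ∃ t', IsChild T r t t' ∧ (∀ t'', IsChild T r t t'' → t'' = t') ∧
    w ∈ β t' ∧ β t = β t' \ {w}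

def IsIntroduceNode (T : SimpleGraph ι) (r : ι) (β : ι → Set V) (w : V) (t : ι) : Prop :=
  ∃ t', IsChild T r t t' ∧ (∀ t'', IsChild T r t t'' → t'' = t') ∧
    w ∈ β t ∧ β t \ {w} = β t'

def IsJoinNode (T : SimpleGraph ι) (r : ι) (β : ι → Set V) (t : ι) : Prop :=
  ∃ t₁ t₂, t₁ ≠ t₂ ∧ IsChild T r t t₁ ∧ IsChild T r t t₂ ∧
    (∀ t'', IsChild T r t t'' → t'' = t₁ ∨ t'' = t₂) ∧ β t = β t₁ ∧ β t = β t₂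

/-- A nice (rooted) tree decomposition. -/
def IsNice (T : SimpleGraph ι) (r : ι) (β : ι → Set V) : Prop :=
  β r = ∅ ∧ ∀ t, IsLeafNode T r β t ∨ (∃ w, IsForgetNode T r β w t) ∨
    (∃ w, IsIntroduceNode T r β w t) ∨ IsJoinNode T r β t

/-- `E(X)`: edges of `G` with both endpoints in `X`. -/
def edgesIn (G : SimpleGraph V) (X : Set V) : Set (Sym2 V) :=
  {e | e ∈ G.edgeSet ∧ ∀ x ∈ e, x ∈ X}

end Defs

section Aux

open SimpleGraph Walk

variable {V : Type*} {ι : Type*} {T : SimpleGraph ι} {r : ι}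

lemma desc_self (t : ι) : Desc T r t t := fun p _ => p.start_mem_support

lemma desc_trans {a b c : ι} (h1 : Desc T r a b) (h2 : Desc T r b c) : Desc T r a c := by
  classical
  intro p hp
  have hb : b ∈ p.support := h2 p hp
  exact Walk.support_dropUntil_subset p hb (h1 (p.dropUntil b hb) (hp.dropUntil hb))

lemma desc_mem_walk {t s : ι} (h : Desc T r t s) (w : T.Walk s r) : t ∈ w.support := by
  classical
  exact Walk.support_bypass_subset w (h w.bypass w.bypass_isPath)

lemma sep_not_mem (hT : T.IsTree) {t t₁ t₂ s₁ : ι}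
    (h1 : IsChild T r t t₁) (h2 : IsChild T r t t₂) (hne : t₁ ≠ t₂)
    (hs1 : Desc T r t₁ s₁) (c : T.Walk s₁ r) (hc : c.IsPath) : t₂ ∉ c.support := by
  classical
  intro ht₂
  have htne1 : t ≠ t₁ := h1.1.ne
  have htne2 : t ≠ t₂ := h2.1.ne
  have ht1c : t₁ ∈ c.support := hs1 c hc
  have hdp : (c.dropUntil t₂ ht₂).IsPath := hc.dropUntil ht₂
  have htd : t ∈ (c.dropUntil t₂ ht₂).support := h2.2 _ hdp
  -- the unique path from t₂ to t is the single edge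
  have hedge : ((Walk.cons h2.1.symm Walk.nil) : T.Walk t₂ t).IsPath := by
    simp [Walk.cons_isPath_iff, Ne.symm htne2]
  have htake : (c.dropUntil t₂ ht₂).takeUntil t htd = Walk.cons h2.1.symm Walk.nil :=
    (hT.existsUnique_path t₂ t).unique (hdp.takeUntil htd) hedge
  -- nodup decomposition of c at t₂
  have hnodup : ((c.takeUntil t₂ ht₂).support ++ (c.dropUntil t₂ ht₂).support.tail).Nodup := by
    have := hc.support_nodup
    rwa [← Walk.take_spec c ht₂, Walk.support_append] at this
  rw [List.nodup_append] at hnodup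
  have httail : t ∈ (c.dropUntil t₂ ht₂).support.tail := by
    have := (c.dropUntil t₂ ht₂).support_eq_cons
    rw [this] at htd
    rcases List.mem_cons.mp htd with h | h
    · exact absurd h htne2
    · exact h
  have htnotin : t ∉ (c.takeUntil t₂ ht₂).support := fun hmem =>
    hnodup.2.2 t hmem t httail rfl
  rw [← Walk.take_spec c ht₂, Walk.mem_support_append_iff] at ht1c
  rcases ht1c with h | h
  · -- t₁ in the prefix: unique path t₁ → t₂ goes through t, so t in prefix: contradiction
    have hfp : ((c.takeUntil t₂ ht₂).dropUntil t₁ h).IsPath := (hc.takeUntil ht₂).dropUntil h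
    have hgp : ((Walk.cons h1.1.symm (Walk.cons h2.1 Walk.nil)) : T.Walk t₁ t₂).IsPath := by
      simp [Walk.cons_isPath_iff, Ne.symm htne1, htne2, hne]
    have hfg : (c.takeUntil t₂ ht₂).dropUntil t₁ h
        = Walk.cons h1.1.symm (Walk.cons h2.1 Walk.nil) :=
      (hT.existsUnique_path t₁ t₂).unique hfp hgp
    have : t ∈ ((c.takeUntil t₂ ht₂).dropUntil t₁ h).support := by
      rw [hfg]; simp
    exact htnotin (Walk.support_dropUntil_subset _ h this)
  · -- t₁ in the suffix from t₂
    rw [← Walk.take_spec (c.dropUntil t₂ ht₂) htd, Walk.mem_support_append_iff] at h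
    rcases h with h | h
    · rw [htake] at h
      simp only [Walk.support_cons, Walk.support_nil] at h
      rcases List.mem_cons.mp h with h | h
      · exact hne h
      · rcases List.mem_singleton.mp h with h
        exact htne1 h.symm
    · -- t₁ in the path from t to r: contradiction with Desc t t₁
      have hdrp : ((c.dropUntil t₂ ht₂).dropUntil t htd).IsPath := hdp.dropUntil htd
      have he : (((c.dropUntil t₂ ht₂).dropUntil t htd).dropUntil t₁ h).IsPath :=
        hdrp.dropUntil h
      have hte : t ∈ (((c.dropUntil t₂ ht₂).dropUntil t htd).dropUntil t₁ h).support :=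
        h1.2 _ he
      have htetail : t ∈ (((c.dropUntil t₂ ht₂).dropUntil t htd).dropUntil t₁ h).support.tail := by
        rw [Walk.support_eq_cons] at hte
        rcases List.mem_cons.mp hte with h' | h'
        · exact absurd h' htne1
        · exact h'
      have hnodup2 : ((((c.dropUntil t₂ ht₂).dropUntil t htd).takeUntil t₁ h).support
          ++ (((c.dropUntil t₂ ht₂).dropUntil t htd).dropUntil t₁ h).support.tail).Nodup := by
        have := hdrp.support_nodup
        rwa [← Walk.take_spec ((c.dropUntil t₂ ht₂).dropUntil t htd) h,
          Walk.support_append] at this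
      rw [List.nodup_append] at hnodup2
      exact hnodup2.2.2 _ (Walk.start_mem_support _) _ htetail rfl

lemma sep_walk (hT : T.IsTree) {t t₁ t₂ s₁ s₂ : ι}
    (h1 : IsChild T r t t₁) (h2 : IsChild T r t t₂) (hne : t₁ ≠ t₂)
    (hs1 : Desc T r t₁ s₁) (hs2 : Desc T r t₂ s₂)
    (w : T.Walk s₁ s₂) : t₂ ∈ w.support := by
  obtain ⟨c, hc, -⟩ := hT.existsUnique_path s₁ r
  have hnot := sep_not_mem hT h1 h2 hne hs1 c hc
  have hmem := desc_mem_walk hs2 (w.reverse.append c)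
  rw [Walk.mem_support_append_iff] at hmem
  rcases hmem with h | h
  · rwa [Walk.support_reverse, List.mem_reverse] at h
  · exact absurd h hnot

lemma child_of_desc (hT : T.IsTree) {t s : ι} (h : Desc T r t s) (hne : t ≠ s) :
    ∃ c, IsChild T r t c ∧ Desc T r c s := by
  classical
  obtain ⟨p, hp, -⟩ := hT.existsUnique_path s r
  have htp : t ∈ p.support := h p hp
  have hq : ((p.takeUntil t htp).reverse).IsPath := (hp.takeUntil htp).reverse
  have hqn : ¬ ((p.takeUntil t htp).reverse).Nil := Walk.not_nil_of_ne hne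
  obtain ⟨c, hadj, q', hq'⟩ := Walk.not_nil_iff.mp hqn
  rw [hq'] at hq
  rw [Walk.cons_isPath_iff] at hq
  refine ⟨c, ⟨hadj, ?_⟩, ?_⟩
  · -- Desc t c
    intro pc hpc
    by_contra htpc
    have hw := desc_mem_walk h (q'.reverse.append pc)
    rw [Walk.mem_support_append_iff] at hw
    rcases hw with hw | hw
    · rw [Walk.support_reverse, List.mem_reverse] at hw
      exact hq.2 hw
    · exact htpc hw
  · -- Desc c s
    intro ps hps
    have htps : t ∈ ps.support := h ps hps
    have huniq : (ps.takeUntil t htps).reverse = (p.takeUntil t htp).reverse :=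
      (hT.existsUnique_path t s).unique ((hps.takeUntil htps).reverse)
        ((hp.takeUntil htp).reverse)
    have hcq : c ∈ ((p.takeUntil t htp).reverse).support := by
      rw [hq']
      simp [Walk.support_cons]
    rw [← huniq, Walk.support_reverse, List.mem_reverse] at hcq
    exact Walk.support_takeUntil_subset _ htps hcq

variable {B : SimpleGraph V} {W U : Set V} {β : ι → Set V}

lemma mem_gammaSet {v : V} {t : ι} :
    v ∈ gammaSet T r β t ↔ ∃ s, Desc T r t s ∧ v ∈ β s := by
  simp [gammaSet]

lemma beta_subset_gamma (t : ι) : β t ⊆ gammaSet T r β t := fun v hv =>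
  mem_gammaSet.mpr ⟨t, desc_self t, hv⟩

lemma gamma_mono {a b : ι} (h : Desc T r a b) :
    gammaSet T r β b ⊆ gammaSet T r β a := fun v hv => by
  obtain ⟨s, hs, hvs⟩ := mem_gammaSet.mp hv
  exact mem_gammaSet.mpr ⟨s, desc_trans h hs, hvs⟩

lemma mem_derivedBag {v : V} {t : ι} :
    v ∈ derivedBag B W U T r β t ↔ v ∈ β t ∩ W ∨
      ∃ s ∈ β t ∩ U, v ∈ B.neighborSet s ∩ gammaSet T r β t := by
  constructor
  · rintro (h | h)
    · exact Or.inl h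
    · simp only [Set.mem_iUnion, exists_prop] at h
      exact Or.inr h
  · rintro (h | h)
    · exact Or.inl h
    · exact Or.inr (by simpa only [Set.mem_iUnion, exists_prop] using h)

lemma original_eq (t : ι) : originalSet B W U T r β t =
    (β t ∩ W) ∪ ⋃ s ∈ β t ∩ U, (B.neighborSet s ∩ β t) := by
  ext v
  simp only [originalSet, Set.mem_inter_iff, Set.mem_union, Set.mem_iUnion, exists_prop]
  constructor
  · rintro ⟨hvβ, hvd⟩
    rcases mem_derivedBag.mp hvd with h | ⟨s, hs, hvn, -⟩
    · exact Or.inl h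
    · exact Or.inr ⟨s, hs, hvn, hvβ⟩
  · rintro (⟨hvβ, hvW⟩ | ⟨s, hs, hvn, hvβ⟩)
    · exact ⟨hvβ, mem_derivedBag.mpr (Or.inl ⟨hvβ, hvW⟩)⟩
    · exact ⟨hvβ, mem_derivedBag.mpr
        (Or.inr ⟨s, hs, hvn, beta_subset_gamma t hvβ⟩)⟩

lemma original_congr {a b : ι} (h : β a = β b) :
    originalSet B W U T r β a = originalSet B W U T r β b := by
  rw [original_eq, original_eq, h]

lemma fake_mem {v : V} {t : ι} (hv : v ∈ fakeSet B W U T r β t) :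
    v ∉ β t ∧ ∃ s ∈ β t ∩ U, v ∈ B.neighborSet s ∩ gammaSet T r β t := by
  obtain ⟨hvd, hvβ⟩ := hv
  refine ⟨hvβ, ?_⟩
  rcases mem_derivedBag.mp hvd with h | h
  · exact absurd h.1 hvβ
  · exact h

end Aux

/-- at a join node `t` with children `t₁` and `t₂`:
`Original(t) = Original(t₁) = Original(t₂)`, `Cliques(t) = Cliques(t₁) = Cliques(t₂)`,
`Fake(t₁) ∩ Fake(t₂) = ∅`, and `Fake(t) = Fake(t₁) ∪ Fake(t₂)`. -/
theorem stmt_3 {V : Type*} {ι : Type*} (B : SimpleGraph V) (W U : Set V)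
    (hbip : IsBipartition B W U)
    (T : SimpleGraph ι) (r : ι) (hT : T.IsTree) (β : ι → Set V)
    (hD : IsTreeDecompOn B Set.univ T β) (hnice : IsNice T r β)
    (t t₁ t₂ : ι) (ht : IsJoinNode T r β t)
    (h₁ : IsChild T r t t₁) (h₂ : IsChild T r t t₂) (h₁₂ : t₁ ≠ t₂) :
    originalSet B W U T r β t = originalSet B W U T r β t₁ ∧
      originalSet B W U T r β t₁ = originalSet B W U T r β t₂ ∧
      cliquesAt B U β t = cliquesAt B U β t₁ ∧
      cliquesAt B U β t₁ = cliquesAt B U β t₂ ∧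
      fakeSet B W U T r β t₁ ∩ fakeSet B W U T r β t₂ = ∅ ∧
      fakeSet B W U T r β t = fakeSet B W U T r β t₁ ∪ fakeSet B W U T r β t₂ := by
  obtain ⟨a, b, hab, hca, hcb, hall, hβa, hβb⟩ := ht
  have hβ₁ : β t = β t₁ := by
    rcases hall t₁ h₁ with h | h <;> rw [h] <;> assumption
  have hβ₂ : β t = β t₂ := by
    rcases hall t₂ h₂ with h | h <;> rw [h] <;> assumption
  have hclass : ∀ c, IsChild T r t c → c = t₁ ∨ c = t₂ := by
    intro c hc
    rcases hall t₁ h₁ with e₁ | e₁ <;> rcases hall t₂ h₂ with e₂ | e₂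
    · exact absurd (e₁.trans e₂.symm) h₁₂
    · rcases hall c hc with e | e
      · exact Or.inl (e.trans e₁.symm)
      · exact Or.inr (e.trans e₂.symm)
    · rcases hall c hc with e | e
      · exact Or.inr (e.trans e₂.symm)
      · exact Or.inl (e.trans e₁.symm)
    · exact absurd (e₁.trans e₂.symm) h₁₂
  have hfake_sub : ∀ s : ι, IsChild T r t s → β t = β s →
      fakeSet B W U T r β s ⊆ fakeSet B W U T r β t := by
    intro s hs hβs v hv
    obtain ⟨hvβ, w, hw, hvn, hvγ⟩ := fake_mem hv
    constructor
    · exact mem_derivedBag.mpr (Or.inr ⟨w, by rwa [hβs], hvn, gamma_mono hs.2 hvγ⟩)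
    · rwa [hβs]
  refine ⟨original_congr hβ₁, original_congr (hβ₁ ▸ hβ₂),
    by unfold cliquesAt; rw [hβ₁],
    by unfold cliquesAt; rw [← hβ₁, hβ₂], ?_, ?_⟩
  · -- disjointness of fake sets
    ext v
    simp only [Set.mem_inter_iff, Set.mem_empty_iff_false, iff_false, not_and]
    intro hv1 hv2
    obtain ⟨hvβ₁, w₁, hw₁, hvn₁, hvγ₁⟩ := fake_mem hv1
    obtain ⟨hvβ₂, w₂, hw₂, hvn₂, hvγ₂⟩ := fake_mem hv2
    obtain ⟨s₁, hds₁, hvs₁⟩ := mem_gammaSet.mp hvγ₁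
    obtain ⟨s₂, hds₂, hvs₂⟩ := mem_gammaSet.mp hvγ₂
    have hconn := hD.conn v (Set.mem_univ v)
    have hreach := hconn.preconnected ⟨s₁, hvs₁⟩ ⟨s₂, hvs₂⟩
    obtain ⟨q⟩ := hreach
    let f : T.induce {x | v ∈ β x} →g T := ⟨Subtype.val, fun h => h⟩
    have ht₂mem : t₂ ∈ (q.map f).support :=
      sep_walk hT h₁ h₂ h₁₂ hds₁ hds₂ (q.map f)
    rw [Walk.support_map, List.mem_map] at ht₂mem
    obtain ⟨⟨x, hx⟩, -, hxe⟩ := ht₂mem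
    exact hvβ₂ (by rwa [← hxe])
  · -- union of fake sets
    apply Set.Subset.antisymm
    · intro v hv
      obtain ⟨hvβ, w, hw, hvn, hvγ⟩ := fake_mem hv
      obtain ⟨s, hds, hvs⟩ := mem_gammaSet.mp hvγ
      have hts : t ≠ s := by
        rintro rfl
        exact hvβ hvs
      obtain ⟨c, hc, hcs⟩ := child_of_desc hT hds hts
      have hvγc : v ∈ gammaSet T r β c := mem_gammaSet.mpr ⟨s, hcs, hvs⟩
      rcases hclass c hc with rfl | rfl
      · exact Or.inl ⟨mem_derivedBag.mpr (Or.inr ⟨w, by rwa [← hβ₁], hvn, hvγc⟩),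
          by rwa [← hβ₁]⟩
      · exact Or.inr ⟨mem_derivedBag.mpr (Or.inr ⟨w, by rwa [← hβ₂], hvn, hvγc⟩),
          by rwa [← hβ₂]⟩
    · exact Set.union_subset (hfake_sub t₁ h₁ hβ₁) (hfake_sub t₂ h₂ hβ₂)
end

section
/- Let B be a simple bipartite graph with bipartition V(B) = W ⊎ U, G its half-square, D = (T, β_D) a nice tree decomposition of B, and D' = (T, β_{D'}) the derived decomposition of G. Let t ∈ V(T) and v ∈ Fake(t). Then: (i) there is exactly one node t' of T that is a forget(v) node of D satisfying v ∈ Fake(t') (a fake-introduce(v) node); (ii) t = t' or t is an ancestor of t'; and (iii) for every node t'' on the unique path in T between t and t', v ∈ Fake(t''). -/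
open SimpleGraph

section Aux

open SimpleGraph Walk

variable {V : Type*} {ι : Type*} {T : SimpleGraph ι}

noncomputable def uPath (hT : T.IsTree) (a b : ι) : T.Walk a b :=
  (hT.existsUnique_path a b).exists.choose

lemma uPath_isPath (hT : T.IsTree) (a b : ι) : (uPath hT a b).IsPath :=
  (hT.existsUnique_path a b).exists.choose_spec

lemma uPath_unique (hT : T.IsTree) {a b : ι} {p : T.Walk a b} (hp : p.IsPath) :
    p = uPath hT a b :=
  (hT.existsUnique_path a b).unique hp (uPath_isPath hT a b)

lemma desc_iff (hT : T.IsTree) {r t t' : ι} :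
    Desc T r t t' ↔ t ∈ (uPath hT t' r).support := by
  constructor
  · exact fun h => h _ (uPath_isPath hT t' r)
  · intro h p hp; rwa [uPath_unique hT hp]

lemma desc_refl (hT : T.IsTree) (r t : ι) : Desc T r t t :=
  fun p _ => p.start_mem_support

lemma uPath_mem_split (hT : T.IsTree) {x y z : ι} (h : y ∈ (uPath hT x z).support) :
    uPath hT x z = (uPath hT x y).append (uPath hT y z) := by
  haveI := Classical.decEq ι
  have h1 := (uPath_isPath hT x z).takeUntil h
  have h2 := (uPath_isPath hT x z).dropUntil h
  rw [← (uPath hT x z).take_spec h, ← uPath_unique hT h1, ← uPath_unique hT h2]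

lemma uPath_split (hT : T.IsTree) {r x y : ι} (h : Desc T r y x) :
    uPath hT x r = (uPath hT x y).append (uPath hT y r) :=
  uPath_mem_split hT ((desc_iff hT).mp h)

lemma desc_trans_s4 (hT : T.IsTree) {r x y z : ι} (h1 : Desc T r y x) (h2 : Desc T r z y) :
    Desc T r z x := by
  rw [desc_iff hT, uPath_split hT h1, Walk.mem_support_append_iff]
  exact Or.inr ((desc_iff hT).mp h2)

lemma desc_antisymm (hT : T.IsTree) {r x y : ι} (h1 : Desc T r y x) (h2 : Desc T r x y) :
    x = y := by
  have l1 := congrArg Walk.length (uPath_split hT h1)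
  have l2 := congrArg Walk.length (uPath_split hT h2)
  rw [Walk.length_append] at l1 l2
  exact Walk.eq_of_length_eq_zero (p := uPath hT x y) (by omega)

lemma uPath_adj (hT : T.IsTree) {a b : ι} (hadj : T.Adj a b) :
    uPath hT a b = Walk.cons hadj Walk.nil :=
  (uPath_unique hT (by simp [Walk.isPath_def, hadj.ne])).symm

lemma desc_adj_eq_cons (hT : T.IsTree) {r a b : ι} (hadj : T.Adj b a) (h : Desc T r a b) :
    uPath hT b r = Walk.cons hadj (uPath hT a r) := by
  rw [uPath_split hT h, uPath_adj hT hadj]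
  rfl

lemma parent_unique (hT : T.IsTree) {r a p q : ι} (hp : T.Adj p a) (hq : T.Adj q a)
    (hdp : Desc T r p a) (hdq : Desc T r q a) : p = q := by
  have e1 := desc_adj_eq_cons hT hp.symm hdp
  have e2 := desc_adj_eq_cons hT hq.symm hdq
  have := congrArg (fun w => Walk.getVert w 1) (e1.symm.trans e2)
  simpa using this

lemma adj_desc_or (hT : T.IsTree) (r : ι) {a b : ι} (hadj : T.Adj a b) :
    Desc T r a b ∨ Desc T r b a := by
  by_cases h : a ∈ (uPath hT b r).support
  · exact Or.inl ((desc_iff hT).mpr h)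
  · right
    have hp : (Walk.cons hadj (uPath hT b r)).IsPath :=
      (uPath_isPath hT b r).cons h
    rw [desc_iff hT, ← uPath_unique hT hp]
    simp

lemma desc_total (hT : T.IsTree) {r c a b : ι} (ha : Desc T r a c) (hb : Desc T r b c) :
    Desc T r a b ∨ Desc T r b a := by
  have e := uPath_split hT ha
  have hbmem := (desc_iff hT).mp hb
  rw [e, Walk.mem_support_append_iff] at hbmem
  rcases hbmem with hbmem | hbmem
  · left
    have e2 := uPath_mem_split hT hbmem
    have eassoc : uPath hT c r
        = (uPath hT c b).append ((uPath hT b a).append (uPath hT a r)) := by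
      rw [e, e2, Walk.append_assoc]
    have hpath : ((uPath hT b a).append (uPath hT a r)).IsPath := by
      have hp := uPath_isPath hT c r
      rw [eassoc] at hp
      exact hp.of_append_right
    rw [desc_iff hT, ← uPath_unique hT hpath, Walk.mem_support_append_iff]
    right; exact (uPath hT a r).start_mem_support
  · exact Or.inr ((desc_iff hT).mpr hbmem)

lemma uPath_support_subset_of_connected (hT : T.IsTree) {S : Set ι}
    (hS : (T.induce S).Connected) {x y : ι} (hx : x ∈ S) (hy : y ∈ S) :
    ∀ z ∈ (uPath hT x y).support, z ∈ S := by
  haveI := Classical.decEq ι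
  obtain ⟨w⟩ := hS.preconnected ⟨x, hx⟩ ⟨y, hy⟩
  have hw : ∀ z ∈ (w.map (⟨Subtype.val, fun {a b} h => h⟩ : T.induce S →g T)).bypass.support,
      z ∈ S := by
    intro z hz
    have := Walk.support_bypass_subset _ hz
    rw [Walk.support_map, List.mem_map] at this
    obtain ⟨⟨z', hz'⟩, _, rfl⟩ := this
    exact hz'
  rwa [uPath_unique hT (Walk.bypass_isPath _)] at hw

lemma exists_topmost (hT : T.IsTree) (r : ι) {S : Set ι}
    (hS : (T.induce S).Connected) {x0 : ι} (hx0 : x0 ∈ S) :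
    ∃ m ∈ S, ∀ x ∈ S, Desc T r m x := by
  classical
  have hAne : Set.Nonempty {n | ∃ x ∈ S, (uPath hT x r).length = n} := ⟨_, x0, hx0, rfl⟩
  obtain ⟨m, hm, hmd⟩ := Nat.sInf_mem hAne
  refine ⟨m, hm, ?_⟩
  have hmin : ∀ x ∈ S, (uPath hT m r).length ≤ (uPath hT x r).length := by
    intro x hx
    rw [hmd]
    exact Nat.sInf_le ⟨x, hx, rfl⟩
  have key : ∀ n, ∀ x ∈ S, (uPath hT x m).length = n → Desc T r m x := by
    intro n
    induction n using Nat.strong_induction_on with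
    | _ n ih =>
      intro x hx hlen
      rcases eq_or_ne x m with rfl | hne
      · exact desc_refl hT r x
      · cases hp : uPath hT x m with
        | nil => exact absurd rfl hne
        | @cons _ c _ hadj rest =>
          have hrest : rest.IsPath := by
            have := uPath_isPath hT x m
            rw [hp] at this
            exact this.of_cons
          have hrest_eq : rest = uPath hT c m := uPath_unique hT hrest
          have hcS : c ∈ S := by
            apply uPath_support_subset_of_connected hT hS hx hm
            rw [hp]; simp
          have hlenc : (uPath hT c m).length < n := by
            have := congrArg Walk.length hp
            rw [Walk.length_cons, hrest_eq] at this
            omega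
          have hmc : Desc T r m c := ih _ hlenc c hcS rfl
          rcases adj_desc_or hT r hadj with hxc | hcx
          · rcases desc_total hT hmc hxc with h | h
            · exact h
            · have := congrArg Walk.length (uPath_split hT h)
              rw [Walk.length_append] at this
              have hle := hmin x hx
              exact absurd (Walk.eq_of_length_eq_zero
                (p := uPath hT m x) (by omega)).symm hne
          · exact desc_trans_s4 hT hcx hmc
  exact fun x hx => key _ x hx rfl

lemma mem_derivedBag_of {B : SimpleGraph V} {W U : Set V} {r : ι} {β : ι → Set V}
    {s v : V} {t m : ι} (hadj : B.Adj s v) (hs : s ∈ β t) (hsU : s ∈ U)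
    (hm : Desc T r t m) (hvm : v ∈ β m) : v ∈ derivedBag B W U T r β t := by
  refine Set.mem_union_right _ ?_
  rw [Set.mem_iUnion₂]
  refine ⟨s, ⟨hs, hsU⟩, hadj, ?_⟩
  rw [gammaSet, Set.mem_iUnion₂]
  exact ⟨m, hm, hvm⟩

end Aux

/-- for `v ∈ Fake(t)` there is a unique fake-introduce(v) node `t'`
(a forget(v) node of `D` with `v ∈ Fake(t')`), `t` is `t'` or an ancestor of `t'`,
and `v ∈ Fake(t'')` for every node `t''` on the path between `t` and `t'`. -/
theorem stmt_4 {V : Type*} {ι : Type*} (B : SimpleGraph V) (W U : Set V)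
    (hbip : IsBipartition B W U)
    (T : SimpleGraph ι) (r : ι) (hT : T.IsTree) (β : ι → Set V)
    (hD : IsTreeDecompOn B Set.univ T β) (hnice : IsNice T r β)
    (t : ι) (v : V) (hv : v ∈ fakeSet B W U T r β t) :
    ∃ t', (IsForgetNode T r β v t' ∧ v ∈ fakeSet B W U T r β t') ∧
      (∀ t'', IsForgetNode T r β v t'' ∧ v ∈ fakeSet B W U T r β t'' → t'' = t') ∧
      Desc T r t t' ∧
      ∀ p : T.Walk t' t, p.IsPath → ∀ t'' ∈ p.support, v ∈ fakeSet B W U T r β t'' := by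
  classical
  -- Extract data from `v ∈ Fake(t)`
  obtain ⟨hvd, hvβt⟩ := hv
  have hvW : v ∉ β t ∩ W := fun h => hvβt h.1
  rcases hvd with hvd | hvd
  · exact absurd hvd hvW
  rw [Set.mem_iUnion₂] at hvd
  obtain ⟨s, ⟨hsβt, hsU⟩, hsv, hγ⟩ := hvd
  rw [gammaSet, Set.mem_iUnion₂] at hγ
  obtain ⟨t₀, hdt₀, hvt₀⟩ := hγ
  -- the connected subtree of nodes whose bag contains `v`
  set Sv : Set ι := {x | v ∈ β x} with hSv
  have hSvconn : (T.induce Sv).Connected := hD.conn v (Set.mem_univ v)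
  have ht₀Sv : t₀ ∈ Sv := hvt₀
  obtain ⟨m, hmSv, hmtop⟩ := exists_topmost hT r hSvconn ht₀Sv
  have hvm : v ∈ β m := hmSv
  -- `m ≠ r`
  have hmr : m ≠ r := by
    rintro rfl
    rw [hnice.1] at hvm
    exact hvm
  -- the parent `t'` of `m`
  cases hp : uPath hT m r with
  | nil => exact absurd rfl hmr
  | @cons _ t' _ hadj rest =>
    have hrest : rest.IsPath := by
      have := uPath_isPath hT m r
      rw [hp] at this
      exact this.of_cons
    have hrest_eq : rest = uPath hT t' r := uPath_unique hT hrest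
    have hdt'm : Desc T r t' m := by
      rw [desc_iff hT, hp]; simp
    -- `v ∉ β t'`
    have hvt' : v ∉ β t' := by
      intro h
      exact hadj.ne (desc_antisymm hT hdt'm (hmtop t' h))
    have hchild : IsChild T r t' m := ⟨hadj.symm, hdt'm⟩
    -- uniqueness of the parent of `m`
    have hpu : ∀ p, IsChild T r p m → p = t' :=
      fun p hpc => parent_unique hT hpc.1 hadj.symm hpc.2 hdt'm
    -- `Desc t m`
    have hdtm : Desc T r t m := by
      have htmem := (desc_iff hT).mp hdt₀
      rw [uPath_split hT (hmtop t₀ ht₀Sv), Walk.mem_support_append_iff] at htmem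
      rcases htmem with h | h
      · exact absurd (uPath_support_subset_of_connected hT hSvconn ht₀Sv hmSv t h) hvβt
      · exact (desc_iff hT).mpr h
    -- `Desc t t'`
    have htm : t ≠ m := fun h => hvβt (h ▸ hvm)
    have hdtt' : Desc T r t t' := by
      have := (desc_iff hT).mp hdtm
      rw [hp] at this
      simp only [Walk.support_cons, List.mem_cons] at this
      rcases this with h | h
      · exact absurd h htm
      · rw [hrest_eq] at h
        exact (desc_iff hT).mpr h
    -- the edge `sv` lives in some bag
    obtain ⟨te, hste, hvte⟩ := hD.edge_mem hsv
    have hteSv : te ∈ Sv := hvte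
    have hdmte : Desc T r m te := hmtop te hteSv
    -- the connected subtree of nodes whose bag contains `s`
    have hSsconn : (T.induce {x | s ∈ β x}).Connected := hD.conn s (Set.mem_univ s)
    -- core claim: every node between `t` and `t'` has `v` in its fake set
    have claim : ∀ t'', Desc T r t t'' → Desc T r t'' t' → v ∈ fakeSet B W U T r β t'' := by
      intro t'' hdtt'' hdt''t'
      have hdt''m : Desc T r t'' m := desc_trans_s4 hT hdt'm hdt''t'
      have hdt''te : Desc T r t'' te := desc_trans_s4 hT hdmte hdt''m
      have hdtte : Desc T r t te := desc_trans_s4 hT hdt''te hdtt''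
      -- `t'' ∈ support (uPath te t)`
      have ht''mem : t'' ∈ (uPath hT te t).support := by
        have h := (desc_iff hT).mp hdt''te
        rw [uPath_split hT hdtte, Walk.mem_support_append_iff] at h
        rcases h with h | h
        · exact h
        · have : t'' = t := desc_antisymm hT hdtt'' ((desc_iff hT).mpr h)
          rw [this]
          exact Walk.end_mem_support _
      -- `s ∈ β t''`
      have hst'' : s ∈ β t'' :=
        uPath_support_subset_of_connected hT hSsconn hste hsβt t'' ht''mem
      -- `v ∉ β t''`
      have hvβt'' : v ∉ β t'' := by
        intro h
        have heq : t'' = m := desc_antisymm hT (hmtop t'' h) hdt''m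
        subst heq
        exact hadj.ne (desc_antisymm hT hdt''t' hdt'm).symm
      exact ⟨mem_derivedBag_of hsv hst'' hsU hdt''m hvm, hvβt''⟩
    -- `t'` is a forget(v) node
    have hforget : IsForgetNode T r β v t' := by
      rcases hnice.2 t' with hleaf | ⟨w, hf⟩ | ⟨w, hi⟩ | hj
      · exact absurd hchild (hleaf.1 m)
      · obtain ⟨c, hc, huc, hwc, hβ⟩ := hf
        have hcm : m = c := huc m hchild
        subst hcm
        have hvw : v = w := by
          by_contra hne
          exact hvt' (hβ ▸ ⟨hvm, hne⟩)
        exact ⟨m, hc, huc, hvw ▸ hvm, hvw ▸ hβ⟩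
      · obtain ⟨c, hc, huc, hwc, hβ⟩ := hi
        have hcm : m = c := huc m hchild
        subst hcm
        have : v ∈ β t' \ {w} := hβ ▸ hvm
        exact absurd this.1 hvt'
      · obtain ⟨t₁, t₂, hne, hc1, hc2, hall, hβ1, hβ2⟩ := hj
        rcases hall m hchild with rfl | rfl
        · exact absurd (hβ1 ▸ hvm) hvt'
        · exact absurd (hβ2 ▸ hvm) hvt'
    refine ⟨t', ⟨hforget, claim t' hdtt' (desc_refl hT r t')⟩, ?_, hdtt', ?_⟩
    · -- uniqueness
      rintro t₂ ⟨⟨c, hcchild, hcu, hvc, hβ2⟩, hfake2⟩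
      have hvβt₂ : v ∉ β t₂ := hfake2.2
      have hcSv : c ∈ Sv := hvc
      have hdmc : Desc T r m c := hmtop c hcSv
      rcases eq_or_ne c m with rfl | hne
      · exact hpu t₂ hcchild
      · exfalso
        have e1 := desc_adj_eq_cons hT hcchild.1.symm hcchild.2
        have e2 := uPath_split hT hdmc
        have hgv := congrArg (fun w => Walk.getVert w 1) (e1.symm.trans e2)
        simp only [Walk.getVert_cons_succ, Walk.getVert_zero, Walk.getVert_append] at hgv
        have hlen : (uPath hT c m).length ≠ 0 := by
          intro h
          exact hne (Walk.eq_of_length_eq_zero h)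
        by_cases hcase : 1 < (uPath hT c m).length
        · rw [if_pos hcase] at hgv
          have ht₂mem : t₂ ∈ (uPath hT c m).support := by
            rw [Walk.mem_support_iff_exists_getVert]
            exact ⟨1, hgv.symm, by omega⟩
          exact hvβt₂ (uPath_support_subset_of_connected hT hSvconn hcSv hmSv t₂ ht₂mem)
        · rw [if_neg hcase] at hgv
          have h1 : (uPath hT c m).length = 1 := by omega
          rw [h1] at hgv
          simp only [Nat.sub_self, Walk.getVert_zero] at hgv
          exact hvβt₂ (hgv ▸ hvm)
    · -- the path condition
      intro p hpp t'' ht''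
      rw [uPath_unique hT hpp] at ht''
      have e := uPath_split hT hdtt'
      have hdt''t' : Desc T r t'' t' := by
        rw [desc_iff hT, e, Walk.mem_support_append_iff]
        exact Or.inl ht''
      have hdtt'' : Desc T r t t'' := by
        have e2 := uPath_mem_split hT ht''
        have eassoc : uPath hT t' r
            = (uPath hT t' t'').append ((uPath hT t'' t).append (uPath hT t r)) := by
          rw [e, e2, Walk.append_assoc]
        have hpath : ((uPath hT t'' t).append (uPath hT t r)).IsPath := by
          have hq := uPath_isPath hT t' r
          rw [eassoc] at hq
          exact hq.of_append_right
        rw [desc_iff hT, ← uPath_unique hT hpath, Walk.mem_support_append_iff]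
        exact Or.inl (Walk.end_mem_support _)
      exact claim t'' hdtt'' hdt''t'
end
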